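/- Sign-coherence of g-vectors (Conjecture 1.2(iii), proved under the sign-coherence hypothesis): assume the global sign-coherence hypothesis. Then for every n×n skew-symmetrizable integer matrix B and every finite sequence w of indices in {1,…,n}, the rows of G^B(w) are sign-coherent: for each i, the entries of row i of G^B(w) are either all nonnegative or all nonpositive. -/

import Mathlib

open Matrix

/-- Entrywise positive part `[B]₊`. -/
def matPos {n : ℕ} (B : Matrix (Fin n) (Fin n) ℤ) : Matrix (Fin n) (Fin n) ℤ :=
  fun i j => max (B i j) 0

/-- `B^{k•}` : the matrix `B` with all entries outside row `k` set to zero. -/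
def rowR {n : ℕ} (B : Matrix (Fin n) (Fin n) ℤ) (k : Fin n) : Matrix (Fin n) (Fin n) ℤ :=
  fun i j => if i = k then B i j else 0

/-- `B^{•k}` : the matrix `B` with all entries outside column `k` set to zero. -/
def colR {n : ℕ} (B : Matrix (Fin n) (Fin n) ℤ) (k : Fin n) : Matrix (Fin n) (Fin n) ℤ :=
  fun i j => if j = k then B i j else 0

/-- `J_k` : the identity matrix with its `(k,k)` entry replaced by `-1`. -/
def Jmat (n : ℕ) (k : Fin n) : Matrix (Fin n) (Fin n) ℤ :=
  Matrix.diagonal (fun i => if i = k then -1 else 1)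

/-- Matrix mutation `μ_k(B)`. -/
def mutB {n : ℕ} (B : Matrix (Fin n) (Fin n) ℤ) (k : Fin n) : Matrix (Fin n) (Fin n) ℤ :=
  fun i j =>
    if i = k ∨ j = k then -B i j
    else B i j + max (B i k) 0 * max (B k j) 0 - max (-B i k) 0 * max (-B k j) 0

/-- Mutation of the `C`-matrix in direction `l`, where `B` is the current exchange matrix. -/
def mutC {n : ℕ} (B C : Matrix (Fin n) (Fin n) ℤ) (l : Fin n) : Matrix (Fin n) (Fin n) ℤ :=
  fun i j =>
    if j = l then -C i j
    else C i j + max (C i l) 0 * max (B l j) 0 - max (-C i l) 0 * max (-B l j) 0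

/-- One step of the simultaneous `(B, C, G)` recursion with initial exchange matrix `B0`. -/
def BCGstep {n : ℕ} (B0 : Matrix (Fin n) (Fin n) ℤ)
    (p : Matrix (Fin n) (Fin n) ℤ × Matrix (Fin n) (Fin n) ℤ × Matrix (Fin n) (Fin n) ℤ)
    (l : Fin n) :
    Matrix (Fin n) (Fin n) ℤ × Matrix (Fin n) (Fin n) ℤ × Matrix (Fin n) (Fin n) ℤ :=
  (mutB p.1 l, mutC p.1 p.2.1 l,
    p.2.2 * (Jmat n l + colR (matPos p.1) l) - B0 * colR (matPos p.2.1) l)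

/-- The triple `(B_m, C_m, G_m)` obtained from `(B0, I, I)` by mutating along the word `w`. -/
def BCG {n : ℕ} (B0 : Matrix (Fin n) (Fin n) ℤ) (w : List (Fin n)) :
    Matrix (Fin n) (Fin n) ℤ × Matrix (Fin n) (Fin n) ℤ × Matrix (Fin n) (Fin n) ℤ :=
  w.foldl (BCGstep B0) (B0, 1, 1)

/-- `B^B(w)` : the exchange matrix at the end of the word `w`. -/
def Bmat {n : ℕ} (B0 : Matrix (Fin n) (Fin n) ℤ) (w : List (Fin n)) : Matrix (Fin n) (Fin n) ℤ :=
  (BCG B0 w).1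

/-- `C^B(w)` : the matrix of c-vectors at the end of the word `w`. -/
def Cmat {n : ℕ} (B0 : Matrix (Fin n) (Fin n) ℤ) (w : List (Fin n)) : Matrix (Fin n) (Fin n) ℤ :=
  (BCG B0 w).2.1

/-- `G^B(w)` : the matrix of g-vectors at the end of the word `w`. -/
def Gmat {n : ℕ} (B0 : Matrix (Fin n) (Fin n) ℤ) (w : List (Fin n)) : Matrix (Fin n) (Fin n) ℤ :=
  (BCG B0 w).2.2

/-- `B` is skew-symmetrized by the diagonal matrix with (positive) diagonal entries `d`,
i.e. `Bᵀ = -D B D⁻¹`, stated integrally as `Bᵀ D = -(D B)`. -/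
def SkewSymmBy {n : ℕ} (B : Matrix (Fin n) (Fin n) ℤ) (d : Fin n → ℤ) : Prop :=
  (∀ i, 0 < d i) ∧ Bᵀ * Matrix.diagonal d = -(Matrix.diagonal d * B)

/-- `B` is skew-symmetrizable. -/
def SkewSymmetrizable {n : ℕ} (B : Matrix (Fin n) (Fin n) ℤ) : Prop :=
  ∃ d : Fin n → ℤ, SkewSymmBy B d

/-- Every column of `C` has all entries nonnegative or all entries nonpositive. -/
def SignCoherent {n : ℕ} (C : Matrix (Fin n) (Fin n) ℤ) : Prop :=
  ∀ j, (∀ i, 0 ≤ C i j) ∨ (∀ i, C i j ≤ 0)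

/-- The global sign-coherence hypothesis in rank `n`: all C-matrices of all cluster patterns
of rank `n` are sign-coherent. -/
def GlobalSC (n : ℕ) : Prop :=
  ∀ B' : Matrix (Fin n) (Fin n) ℤ, SkewSymmetrizable B' →
    ∀ w' : List (Fin n), SignCoherent (Cmat B' w')

/-- The sign `ε_j(C)` of the `j`-th column of a sign-coherent matrix `C`:
`-1` if column `j` contains a negative entry, `1` otherwise. -/
def epsCol {n : ℕ} (C : Matrix (Fin n) (Fin n) ℤ) (j : Fin n) : ℤ :=
  if ∃ i, C i j < 0 then -1 else 1

namespace SCaux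

variable {n : ℕ}

/-! ### scalar lemmas -/

lemma mpos {x : ℤ} (h : 0 ≤ x) : max x 0 = x := max_eq_left h
lemma mneg {x : ℤ} (h : x ≤ 0) : max x 0 = 0 := max_eq_right h

lemma pp_add (x : ℤ) : max x 0 = max (-x) 0 + x := by
  rcases le_total x 0 with h | h
  · rw [mneg h, mpos (by linarith)]; ring
  · rw [mpos h, mneg (by linarith)]; ring

lemma max_mul_pos {c : ℤ} (x : ℤ) (hc : 0 < c) : max x 0 * c = max (x * c) 0 := by
  rcases le_total x 0 with h | h
  · rw [mneg h, mneg (by nlinarith)]; ring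
  · rw [mpos h, mpos (by nlinarith)]

lemma pos_mul_max {c : ℤ} (x : ℤ) (hc : 0 < c) : c * max x 0 = max (c * x) 0 := by
  rw [mul_comm, max_mul_pos x hc, mul_comm]

/-- the scalar identity behind `F * μ(B) = B * E`, sign `+1`. -/
lemma S1p (a b : ℤ) :
    max a 0 * max b 0 - max (-a) 0 * max (-b) 0 + max (-a) 0 * (-b) = a * max b 0 := by
  rcases le_total a 0 with ha | ha
  · rw [mneg ha, mpos (neg_nonneg.2 ha)]
    rcases le_total b 0 with hb | hb
    · rw [mneg hb, mpos (neg_nonneg.2 hb)]; ring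
    · rw [mpos hb, mneg (neg_nonpos.2 hb)]; ring
  · rw [mpos ha, mneg (neg_nonpos.2 ha)]; ring

/-- the scalar identity behind `F * μ(B) = B * E`, sign `-1`. -/
lemma S1m (a b : ℤ) :
    max a 0 * max b 0 - max (-a) 0 * max (-b) 0 + max a 0 * (-b) = a * max (-b) 0 := by
  rcases le_total a 0 with ha | ha
  · rw [mneg ha, mpos (neg_nonneg.2 ha)]; ring
  · rw [mpos ha, mneg (neg_nonpos.2 ha)]
    rcases le_total b 0 with hb | hb
    · rw [mneg hb, mpos (neg_nonneg.2 hb)]; ring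
    · rw [mpos hb, mneg (neg_nonpos.2 hb)]; ring

lemma S1 (a b ε : ℤ) (hε : ε = 1 ∨ ε = -1) :
    max a 0 * max b 0 - max (-a) 0 * max (-b) 0 + max (-ε * a) 0 * (-b) = a * max (ε * b) 0 := by
  rcases hε with rfl | rfl
  · simpa only [neg_one_mul, one_mul] using S1p a b
  · simpa only [neg_neg, neg_one_mul, one_mul, neg_mul] using S1m a b

/-! ### matrix structural lemmas -/

lemma rowR_mul (M X : Matrix (Fin n) (Fin n) ℤ) (l : Fin n) :
    rowR M l * X = rowR (M * X) l := by
  ext i j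
  by_cases h : i = l
  · subst h; simp [rowR, Matrix.mul_apply]
  · simp [rowR, Matrix.mul_apply, h]

lemma mul_rowR_apply (X M : Matrix (Fin n) (Fin n) ℤ) (k : Fin n) (i j : Fin n) :
    (X * rowR M k) i j = X i k * M k j := by
  simp [Matrix.mul_apply, rowR, mul_ite, mul_zero, Finset.sum_ite_eq']

lemma mul_colR (X M : Matrix (Fin n) (Fin n) ℤ) (l : Fin n) :
    X * colR M l = colR (X * M) l := by
  ext i j
  by_cases h : j = l
  · subst h; simp [colR, Matrix.mul_apply]
  · simp [colR, Matrix.mul_apply, h]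

lemma colR_mul_apply (M X : Matrix (Fin n) (Fin n) ℤ) (k : Fin n) (i j : Fin n) :
    (colR M k * X) i j = M i k * X k j := by
  simp [Matrix.mul_apply, colR, ite_mul, zero_mul, Finset.sum_ite_eq]

lemma Jmat_sq (l : Fin n) : Jmat n l * Jmat n l = 1 := by
  rw [Jmat, Matrix.diagonal_mul_diagonal]
  have : ∀ i : Fin n, ((if i = l then (-1 : ℤ) else 1) * (if i = l then -1 else 1)) = 1 := by
    intro i; split <;> ring
  simp only [this]; exact Matrix.diagonal_one

lemma Jmat_mul_apply (l : Fin n) (X : Matrix (Fin n) (Fin n) ℤ) (i j : Fin n) :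
    (Jmat n l * X) i j = (if i = l then -1 else 1) * X i j := by
  simp [Jmat, Matrix.diagonal_mul]

lemma mul_Jmat_apply (l : Fin n) (X : Matrix (Fin n) (Fin n) ℤ) (i j : Fin n) :
    (X * Jmat n l) i j = X i j * (if j = l then -1 else 1) := by
  simp [Jmat, Matrix.mul_diagonal]

lemma Jmat_mul_rowR (M : Matrix (Fin n) (Fin n) ℤ) (l : Fin n) :
    Jmat n l * rowR M l = -(rowR M l) := by
  ext i j
  by_cases h : i = l <;> simp [Jmat_mul_apply, rowR, h]

lemma rowR_mul_Jmat {M : Matrix (Fin n) (Fin n) ℤ} {l : Fin n} (hM : M l l = 0) :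
    rowR M l * Jmat n l = rowR M l := by
  rw [rowR_mul]
  ext i j
  by_cases hi : i = l
  · by_cases hj : j = l <;> simp [rowR, mul_Jmat_apply, hi, hj, hM]
  · simp [rowR, hi]

lemma rowR_mul_rowR {M : Matrix (Fin n) (Fin n) ℤ} {l : Fin n} (hM : M l l = 0)
    (N : Matrix (Fin n) (Fin n) ℤ) : rowR M l * rowR N l = 0 := by
  rw [rowR_mul]
  ext i j
  by_cases hi : i = l <;> simp [rowR, mul_rowR_apply, hi, hM]

lemma colR_mul_Jmat (M : Matrix (Fin n) (Fin n) ℤ) (l : Fin n) :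
    colR M l * Jmat n l = -(colR M l) := by
  ext i j
  by_cases h : j = l <;> simp [mul_Jmat_apply, colR, h]

lemma Jmat_mul_colR {M : Matrix (Fin n) (Fin n) ℤ} {l : Fin n} (hM : M l l = 0) :
    Jmat n l * colR M l = colR M l := by
  ext i j
  by_cases hj : j = l
  · by_cases hi : i = l <;> simp [Jmat_mul_apply, colR, hi, hj, hM]
  · simp [Jmat_mul_apply, colR, hj]

lemma colR_mul_colR {M : Matrix (Fin n) (Fin n) ℤ} {l : Fin n} (hM : M l l = 0) :
    colR M l * colR M l = 0 := by
  ext i j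
  by_cases hj : j = l <;> simp [colR_mul_apply, colR, hj, hM]

/-! ### E and F matrices -/

def Emat {n : ℕ} (B : Matrix (Fin n) (Fin n) ℤ) (l : Fin n) (ε : ℤ) :
    Matrix (Fin n) (Fin n) ℤ :=
  Jmat n l + rowR (matPos (ε • B)) l

def Fmat {n : ℕ} (B : Matrix (Fin n) (Fin n) ℤ) (l : Fin n) (ε : ℤ) :
    Matrix (Fin n) (Fin n) ℤ :=
  Jmat n l + colR (matPos (ε • B)) l

variable {n : ℕ}

lemma matPos_apply (B : Matrix (Fin n) (Fin n) ℤ) (i j : Fin n) :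
    matPos B i j = max (B i j) 0 := rfl

lemma smul_app (ε : ℤ) (B : Matrix (Fin n) (Fin n) ℤ) (i j : Fin n) :
    (ε • B) i j = ε * B i j := rfl

lemma mul_Emat_apply (C B : Matrix (Fin n) (Fin n) ℤ) (l : Fin n) (ε : ℤ) (i j : Fin n) :
    (C * Emat B l ε) i j = C i j * (if j = l then -1 else 1) + C i l * max (ε * B l j) 0 := by
  rw [Emat, mul_add, Matrix.add_apply, mul_Jmat_apply, mul_rowR_apply, matPos_apply, smul_app]

lemma Emat_mul_apply (B : Matrix (Fin n) (Fin n) ℤ) (l : Fin n) (ε : ℤ)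
    (X : Matrix (Fin n) (Fin n) ℤ) (i j : Fin n) :
    (Emat B l ε * X) i j =
      (if i = l then -1 else 1) * X i j + (if i = l then (matPos (ε • B) * X) l j else 0) := by
  rw [Emat, add_mul, Matrix.add_apply, Jmat_mul_apply, rowR_mul]
  by_cases h : i = l <;> simp only [rowR, h, if_true, if_false]

lemma mul_Fmat_apply (C B : Matrix (Fin n) (Fin n) ℤ) (l : Fin n) (ε : ℤ) (i j : Fin n) :
    (C * Fmat B l ε) i j =
      C i j * (if j = l then -1 else 1) + (if j = l then (C * matPos (ε • B)) i l else 0) := by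
  rw [Fmat, mul_add, Matrix.add_apply, mul_Jmat_apply, mul_colR]
  by_cases h : j = l <;> simp only [colR, h, if_true, if_false]

lemma Fmat_mul_apply (B : Matrix (Fin n) (Fin n) ℤ) (l : Fin n) (ε : ℤ)
    (X : Matrix (Fin n) (Fin n) ℤ) (i j : Fin n) :
    (Fmat B l ε * X) i j = (if i = l then -1 else 1) * X i j + max (ε * B i l) 0 * X l j := by
  rw [Fmat, add_mul, Matrix.add_apply, Jmat_mul_apply, colR_mul_apply, matPos_apply, smul_app]

lemma matPos_smul_apply (ε : ℤ) (B : Matrix (Fin n) (Fin n) ℤ) (i j : Fin n) :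
    matPos (ε • B) i j = max (ε * B i j) 0 := rfl

lemma matPos_smul_diag {B : Matrix (Fin n) (Fin n) ℤ} {l : Fin n} (h : B l l = 0) (ε : ℤ) :
    matPos (ε • B) l l = 0 := by
  rw [matPos_smul_apply, h, mul_zero]; exact max_self 0

lemma Emat_invol {B : Matrix (Fin n) (Fin n) ℤ} {l : Fin n} (h : B l l = 0) (ε : ℤ) :
    Emat B l ε * Emat B l ε = 1 := by
  have hM : matPos (ε • B) l l = 0 := matPos_smul_diag h ε
  rw [Emat, add_mul, mul_add, mul_add, Jmat_sq, Jmat_mul_rowR,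
    rowR_mul_Jmat hM, rowR_mul_rowR hM]
  abel

lemma Fmat_invol {B : Matrix (Fin n) (Fin n) ℤ} {l : Fin n} (h : B l l = 0) (ε : ℤ) :
    Fmat B l ε * Fmat B l ε = 1 := by
  have hM : matPos (ε • B) l l = 0 := matPos_smul_diag h ε
  rw [Fmat, add_mul, mul_add, mul_add, Jmat_sq, Jmat_mul_colR hM,
    colR_mul_Jmat, colR_mul_colR hM]
  abel

lemma Emat_diff (B : Matrix (Fin n) (Fin n) ℤ) (l : Fin n) (c : ℤ) :
    Emat B l c = Emat B l (-c) + rowR (c • B) l := by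
  rw [Emat, Emat, add_assoc]
  congr 1
  ext i j
  by_cases h : i = l
  · subst h
    simp only [rowR, Matrix.add_apply, if_true]
    rw [matPos_smul_apply, matPos_smul_apply, smul_app, neg_mul]
    exact pp_add (c * B i j)
  · simp [rowR, h]

/-- `Emat` only depends on row `l` of its matrix. -/
lemma Emat_congr_row {B B' : Matrix (Fin n) (Fin n) ℤ} {l : Fin n}
    (h : ∀ j, B l j = B' l j) (ε : ℤ) : Emat B l ε = Emat B' l ε := by
  rw [Emat, Emat]
  congr 1
  ext i j
  by_cases hi : i = l
  · subst hi
    simp only [rowR, if_true]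
    rw [matPos_smul_apply, matPos_smul_apply, h j]
  · simp [rowR, hi]

/-! ### epsilon lemmas -/

lemma eps_cases (C : Matrix (Fin n) (Fin n) ℤ) (j : Fin n) :
    (epsCol C j = 1 ∧ ∀ i, 0 ≤ C i j) ∨ (epsCol C j = -1 ∧ ∃ i, C i j < 0) := by
  rw [epsCol]
  split_ifs with h
  · exact Or.inr ⟨rfl, h⟩
  · push_neg at h
    exact Or.inl ⟨rfl, h⟩

lemma eps_pm (C : Matrix (Fin n) (Fin n) ℤ) (j : Fin n) : epsCol C j = 1 ∨ epsCol C j = -1 := by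
  rcases eps_cases C j with ⟨h, _⟩ | ⟨h, _⟩ <;> [exact Or.inl h; exact Or.inr h]

lemma eps_one_col {C : Matrix (Fin n) (Fin n) ℤ} {j : Fin n} (h : epsCol C j = 1) :
    ∀ i, 0 ≤ C i j := by
  rcases eps_cases C j with ⟨_, h2⟩ | ⟨h1, _⟩
  · exact h2
  · rw [h1] at h; norm_num at h

lemma eps_negone_col {C : Matrix (Fin n) (Fin n) ℤ} {j : Fin n} (hC : SignCoherent C)
    (h : epsCol C j = -1) : ∀ i, C i j ≤ 0 := by
  rcases eps_cases C j with ⟨h1, _⟩ | ⟨_, t, ht⟩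
  · rw [h1] at h; norm_num at h
  · rcases hC j with hp | hn
    · exact absurd (hp t) (not_le.2 ht)
    · exact hn

lemma signCoherent_one : SignCoherent (1 : Matrix (Fin n) (Fin n) ℤ) := by
  intro j
  left
  intro i
  by_cases h : i = j <;> simp [Matrix.one_apply, h]

lemma epsCol_one (l : Fin n) : epsCol (1 : Matrix (Fin n) (Fin n) ℤ) l = 1 := by
  rw [epsCol, if_neg]
  rintro ⟨i, hi⟩
  by_cases h : i = l <;> simp [Matrix.one_apply, h] at hi

lemma epsCol_unit {C : Matrix (Fin n) (Fin n) ℤ} {j k : Fin n} {c : ℤ}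
    (hc : c = 1 ∨ c = -1) (hcol : ∀ t, C t j = if t = k then c else 0) :
    epsCol C j = c := by
  rcases hc with rfl | rfl
  · rw [epsCol, if_neg]
    rintro ⟨t, ht⟩
    rw [hcol t] at ht
    split at ht <;> norm_num at ht
  · rw [epsCol, if_pos]
    exact ⟨k, by rw [hcol k, if_pos rfl]; norm_num⟩

lemma epsCol_congr {C C' : Matrix (Fin n) (Fin n) ℤ} {j j' : Fin n}
    (hC : SignCoherent C) (hC' : SignCoherent C') (t : Fin n)
    (h : C t j = C' t j') (hne : C t j ≠ 0) : epsCol C j = epsCol C' j' := by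
  rcases lt_trichotomy (C t j) 0 with hlt | heq | hgt
  · rw [epsCol, if_pos ⟨t, hlt⟩, epsCol, if_pos ⟨t, h ▸ hlt⟩]
  · exact absurd heq hne
  · have h1 : ¬ ∃ i, C i j < 0 := by
      rintro ⟨i, hi⟩
      rcases hC j with hp | hn
      · exact absurd (hp i) (not_le.2 hi)
      · exact absurd (hn t) (not_le.2 hgt)
    have h2 : ¬ ∃ i, C' i j' < 0 := by
      rintro ⟨i, hi⟩
      rcases hC' j' with hp | hn
      · exact absurd (hp i) (not_le.2 hi)
      · exact absurd (hn t) (not_le.2 (h ▸ hgt))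
    rw [epsCol, if_neg h1, epsCol, if_neg h2]

/-! ### skew-symmetry lemmas -/

lemma skew_entry {B : Matrix (Fin n) (Fin n) ℤ} {d : Fin n → ℤ} (h : SkewSymmBy B d) :
    ∀ i j, d i * B i j = -(d j * B j i) := by
  intro i j
  have := h.2
  have h2 : ∀ a b, (Bᵀ * Matrix.diagonal d) a b = (-(Matrix.diagonal d * B)) a b := by
    intro a b; rw [this]
  have h3 := h2 j i
  rw [Matrix.mul_diagonal, Matrix.neg_apply, Matrix.diagonal_mul, Matrix.transpose_apply] at h3
  linarith [h3]

lemma skew_diag {B : Matrix (Fin n) (Fin n) ℤ} {d : Fin n → ℤ} (h : SkewSymmBy B d)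
    (i : Fin n) : B i i = 0 := by
  have h1 := skew_entry h i i
  have h2 : d i * B i i = 0 := by linarith
  rcases mul_eq_zero.1 h2 with h3 | h3
  · exact absurd h3 (ne_of_gt (h.1 i))
  · exact h3

lemma skew_of_entry {B : Matrix (Fin n) (Fin n) ℤ} {d : Fin n → ℤ} (hd : ∀ i, 0 < d i)
    (h : ∀ i j, d i * B i j = -(d j * B j i)) : SkewSymmBy B d := by
  refine ⟨hd, ?_⟩
  ext a b
  rw [Matrix.mul_diagonal, Matrix.neg_apply, Matrix.diagonal_mul, Matrix.transpose_apply]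
  linarith [h a b]

lemma skew_neg {B : Matrix (Fin n) (Fin n) ℤ} {d : Fin n → ℤ} (h : SkewSymmBy B d) :
    SkewSymmBy (-B) d := by
  refine skew_of_entry h.1 fun i j => ?_
  have := skew_entry h i j
  simp only [Matrix.neg_apply]
  linarith

lemma skew_mutB {B : Matrix (Fin n) (Fin n) ℤ} {d : Fin n → ℤ} (h : SkewSymmBy B d)
    (k : Fin n) : SkewSymmBy (mutB B k) d := by
  refine skew_of_entry h.1 fun i j => ?_
  have hdk := h.1 k
  by_cases hi : i = k
  · subst hi
    have := skew_entry h i j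
    simp only [mutB, eq_self_iff_true, true_or, or_true, if_true]
    linarith
  · by_cases hj : j = k
    · subst hj
      have := skew_entry h i j
      simp only [mutB, eq_self_iff_true, true_or, or_true, if_true]
      linarith
    · have hij : ¬(i = k ∨ j = k) := by tauto
      have hji : ¬(j = k ∨ i = k) := by tauto
      simp only [mutB, if_neg hij, if_neg hji]
      -- multiply through by d k
      have cancel : ∀ x y : ℤ, d k * x = d k * y → x = y :=
        fun x y hxy => mul_left_cancel₀ (ne_of_gt hdk) hxy
      apply cancel
      have E1 : (d j * max (B j k) 0) * (d k * max (B k i) 0)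
          = (d k * max (-B k j) 0) * (d i * max (-B i k) 0) := by
        rw [pos_mul_max _ (h.1 j), pos_mul_max _ (h.1 k), pos_mul_max _ (h.1 k),
          pos_mul_max _ (h.1 i)]
        congr 1
        · congr 1
          have := skew_entry h j k; linarith
        · congr 1
          have := skew_entry h k i; linarith
      have E2 : (d j * max (-B j k) 0) * (d k * max (-B k i) 0)
          = (d k * max (B k j) 0) * (d i * max (B i k) 0) := by
        rw [pos_mul_max _ (h.1 j), pos_mul_max _ (h.1 k), pos_mul_max _ (h.1 k),
          pos_mul_max _ (h.1 i)]
        congr 1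
        · congr 1
          have := skew_entry h j k; linarith
        · congr 1
          have := skew_entry h k i; linarith
      have h0 := skew_entry h i j
      linear_combination E1 - E2 + d k * h0

/-! ### mutation basics -/

lemma mutB_row_self (B : Matrix (Fin n) (Fin n) ℤ) (k j : Fin n) :
    mutB B k k j = -B k j := by
  simp [mutB]

lemma mutB_invol (B : Matrix (Fin n) (Fin n) ℤ) (k : Fin n) : mutB (mutB B k) k = B := by
  ext i j
  by_cases hi : i = k
  · subst hi; simp [mutB]
  · by_cases hj : j = k
    · subst hj; simp [mutB]
    · have hij : ¬(i = k ∨ j = k) := by tauto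
      simp only [mutB, if_neg hij, eq_self_iff_true, or_true, true_or, if_true, neg_neg]
      ring

lemma mutB_neg (B : Matrix (Fin n) (Fin n) ℤ) (k : Fin n) : mutB (-B) k = -(mutB B k) := by
  ext i j
  by_cases hi : i = k
  · subst hi; simp [mutB]
  · by_cases hj : j = k
    · subst hj; simp [mutB]
    · have hij : ¬(i = k ∨ j = k) := by tauto
      simp only [mutB, if_neg hij, Matrix.neg_apply, neg_neg]
      ring

/-! ### fold plumbing -/

lemma BCG_nil (B : Matrix (Fin n) (Fin n) ℤ) : BCG B [] = (B, 1, 1) := rfl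

lemma Cmat_nil (B : Matrix (Fin n) (Fin n) ℤ) : Cmat B [] = 1 := rfl

lemma Gmat_nil (B : Matrix (Fin n) (Fin n) ℤ) : Gmat B [] = 1 := rfl

lemma Bmat_nil (B : Matrix (Fin n) (Fin n) ℤ) : Bmat B [] = B := rfl

lemma BCG_append (B : Matrix (Fin n) (Fin n) ℤ) (w : List (Fin n)) (k : Fin n) :
    BCG B (w ++ [k]) = BCGstep B (BCG B w) k := by
  rw [BCG, BCG, List.foldl_append, List.foldl_cons, List.foldl_nil]

lemma Bmat_append (B : Matrix (Fin n) (Fin n) ℤ) (w : List (Fin n)) (k : Fin n) :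
    Bmat B (w ++ [k]) = mutB (Bmat B w) k := by
  rw [Bmat, BCG_append]; rfl

lemma Cmat_append (B : Matrix (Fin n) (Fin n) ℤ) (w : List (Fin n)) (k : Fin n) :
    Cmat B (w ++ [k]) = mutC (Bmat B w) (Cmat B w) k := by
  rw [Cmat, BCG_append]; rfl

lemma Gmat_append (B : Matrix (Fin n) (Fin n) ℤ) (w : List (Fin n)) (k : Fin n) :
    Gmat B (w ++ [k]) =
      Gmat B w * (Jmat n k + colR (matPos (Bmat B w)) k) - B * colR (matPos (Cmat B w)) k := by
  rw [Gmat, BCG_append]; rfl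

lemma BCG_fst (B0 : Matrix (Fin n) (Fin n) ℤ) (w : List (Fin n)) :
    ∀ p, (List.foldl (BCGstep B0) p w).1 = List.foldl mutB p.1 w := by
  induction w with
  | nil => intro p; rfl
  | cons a t ih => intro p; rw [List.foldl_cons, List.foldl_cons, ih]; rfl

lemma Bmat_foldl (B : Matrix (Fin n) (Fin n) ℤ) (w : List (Fin n)) :
    Bmat B w = List.foldl mutB B w := BCG_fst B w (B, 1, 1)

lemma Bmat_cons (B : Matrix (Fin n) (Fin n) ℤ) (l : Fin n) (w : List (Fin n)) :
    Bmat B (l :: w) = Bmat (mutB B l) w := by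
  rw [Bmat_foldl, Bmat_foldl, List.foldl_cons]

lemma Bmat_neg (B : Matrix (Fin n) (Fin n) ℤ) (w : List (Fin n)) :
    Bmat (-B) w = -(Bmat B w) := by
  rw [Bmat_foldl, Bmat_foldl]
  induction w generalizing B with
  | nil => rfl
  | cons a t ih => rw [List.foldl_cons, List.foldl_cons, mutB_neg, ih]

lemma Bmat_rev (B : Matrix (Fin n) (Fin n) ℤ) (w : List (Fin n)) :
    Bmat (Bmat B w) w.reverse = B := by
  induction w generalizing B with
  | nil => rfl
  | cons l t ih =>
      rw [Bmat_cons, List.reverse_cons, Bmat_append, ih (mutB B l), mutB_invol]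

lemma skew_Bmat {B : Matrix (Fin n) (Fin n) ℤ} {d : Fin n → ℤ} (h : SkewSymmBy B d)
    (w : List (Fin n)) : SkewSymmBy (Bmat B w) d := by
  rw [Bmat_foldl]
  induction w generalizing B with
  | nil => exact h
  | cons a t ih => rw [List.foldl_cons]; exact ih (skew_mutB h a)

/-! ### the coherent forms of the C- and G-steps -/

lemma key_eps {C : Matrix (Fin n) (Fin n) ℤ} (hC : SignCoherent C) (l : Fin n) (i : Fin n)
    (x : ℤ) :
    max (C i l) 0 * max x 0 - max (-C i l) 0 * max (-x) 0 = C i l * max (epsCol C l * x) 0 := by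
  rcases eps_cases C l with ⟨h1, h2⟩ | ⟨h1, _⟩
  · rw [h1, one_mul, mpos (h2 i), mneg (neg_nonpos.2 (h2 i))]
    ring
  · have h2 := eps_negone_col hC h1
    rw [h1, neg_one_mul, mneg (h2 i), mpos (neg_nonneg.2 (h2 i))]
    ring

/-- the C-step, in coherent form. -/
lemma mutC_eq {B C : Matrix (Fin n) (Fin n) ℤ} {l : Fin n} (hB : B l l = 0)
    (hC : SignCoherent C) : mutC B C l = C * Emat B l (epsCol C l) := by
  ext i j
  rw [mul_Emat_apply]
  by_cases hj : j = l
  · subst hj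
    rw [mutC, if_pos rfl, hB, mul_zero, max_self, mul_zero, add_zero, if_pos rfl]
    ring
  · rw [mutC, if_neg hj, if_neg hj, mul_one]
    have := key_eps hC l i (B l j)
    linarith

/-- the G-step, in coherent form. -/
lemma Gstep_eq {Bc C G B0 : Matrix (Fin n) (Fin n) ℤ} {l : Fin n}
    (hC : SignCoherent C) (hGB : G * Bc = B0 * C) :
    G * (Jmat n l + colR (matPos Bc) l) - B0 * colR (matPos C) l
      = G * Fmat Bc l (-(epsCol C l)) := by
  rcases eps_cases C l with ⟨h1, h2⟩ | ⟨h1, h2⟩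
  · -- positive column
    have hmp : colR (matPos C) l = colR C l := by
      ext i j
      by_cases hj : j = l <;> simp [colR, matPos_apply, hj, mpos (h2 i)]
    rw [hmp, mul_colR, ← hGB, ← mul_colR, ← mul_sub]
    congr 1
    rw [h1, Fmat, add_sub_assoc]
    congr 1
    ext i j
    by_cases hj : j = l
    · subst hj
      simp only [Matrix.sub_apply, colR, if_true]
      rw [matPos_apply, matPos_smul_apply, neg_one_mul]
      have := pp_add (Bc i j)
      linarith
    · simp [colR, hj]
  · -- negative column
    have h3 := eps_negone_col hC h1
    have hmp : colR (matPos C) l = 0 := by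
      ext i j
      by_cases hj : j = l <;> simp [colR, matPos_apply, hj, mneg (h3 i)]
    rw [hmp, mul_zero, sub_zero, h1, neg_neg, Fmat, one_smul]

lemma mutB_col_self (B : Matrix (Fin n) (Fin n) ℤ) (k i : Fin n) :
    mutB B k i k = -B i k := by
  simp [mutB]

/-- the key exchange identity `F(-ε) μ_k(B) = B E(ε)`. -/
lemma F_mul_mutB {Bc : Matrix (Fin n) (Fin n) ℤ} {k : Fin n} (hkk : Bc k k = 0)
    {ε : ℤ} (hε : ε = 1 ∨ ε = -1) :
    Fmat Bc k (-ε) * mutB Bc k = Bc * Emat Bc k ε := by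
  ext i j
  rw [Fmat_mul_apply, mul_Emat_apply]
  by_cases hi : i = k
  · rw [hi, if_pos rfl, mutB_row_self, hkk, mul_zero, max_self, zero_mul, add_zero, zero_mul,
      add_zero]
    by_cases hj : j = k
    · rw [hj, if_pos rfl, hkk]
      ring
    · rw [if_neg hj]
      ring
  · rw [if_neg hi, one_mul]
    by_cases hj : j = k
    · rw [hj, mutB_col_self, mutB_row_self, hkk]
      simp [max_self]
    · have hij : ¬(i = k ∨ j = k) := by tauto
      rw [mutB, if_neg hij, if_neg hj, mul_one, mutB_row_self]
      have := S1 (Bc i k) (Bc k j) ε hε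
      linarith

/-- `Eᵀ D = D F(-ε)` for skew-symmetrizable `B`. -/
lemma EtD {B : Matrix (Fin n) (Fin n) ℤ} {d : Fin n → ℤ} (h : SkewSymmBy B d)
    (k : Fin n) (ε : ℤ) :
    (Emat B k ε)ᵀ * Matrix.diagonal d = Matrix.diagonal d * Fmat B k (-ε) := by
  ext i j
  rw [Matrix.mul_diagonal, Matrix.diagonal_mul, Matrix.transpose_apply]
  have eE : Emat B k ε j i
      = (if j = i then (if j = k then (-1 : ℤ) else 1) else 0)
        + (if j = k then max (ε * B k i) 0 else 0) := by
    rw [Emat, Matrix.add_apply]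
    congr 1
    have hr : rowR (matPos (ε • B)) k j i = if j = k then matPos (ε • B) j i else 0 := rfl
    rw [hr]
    by_cases hjk : j = k
    · rw [if_pos hjk, if_pos hjk, hjk, matPos_smul_apply]
    · rw [if_neg hjk, if_neg hjk]
  have eF : Fmat B k (-ε) i j
      = (if i = j then (if i = k then (-1 : ℤ) else 1) else 0)
        + (if j = k then max (-ε * B i k) 0 else 0) := by
    rw [Fmat, Matrix.add_apply]
    congr 1
    have hc : colR (matPos ((-ε) • B)) k i j = if j = k then matPos ((-ε) • B) i j else 0 := rfl
    rw [hc]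
    by_cases hjk : j = k
    · rw [if_pos hjk, if_pos hjk, hjk, matPos_smul_apply]
    · rw [if_neg hjk, if_neg hjk]
  rw [eE, eF, add_mul, mul_add]
  congr 1
  · by_cases hij : i = j
    · subst hij
      simp [mul_comm]
    · rw [if_neg (fun hh : j = i => hij hh.symm), if_neg hij, zero_mul, mul_zero]
  · by_cases hj : j = k
    · subst hj
      rw [if_pos rfl, if_pos rfl, max_mul_pos _ (h.1 j), pos_mul_max _ (h.1 i)]
      congr 1
      have h1 := skew_entry h j i
      linear_combination ε * h1
    · rw [if_neg hj, if_neg hj, zero_mul, mul_zero]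

/-! ### the forward induction package -/

lemma FWD (hGSC : GlobalSC n) {B : Matrix (Fin n) (Fin n) ℤ} {d : Fin n → ℤ}
    (hd : SkewSymmBy B d) (w : List (Fin n)) :
    SkewSymmBy (Bmat B w) d ∧ Gmat B w * Bmat B w = B * Cmat B w ∧
      (Cmat B w)ᵀ * Matrix.diagonal d * Gmat B w = Matrix.diagonal d := by
  induction w using List.reverseRecOn with
  | nil =>
      refine ⟨hd, ?_, ?_⟩
      · rw [Bmat_nil, Cmat_nil, Gmat_nil, one_mul, mul_one]
      · rw [Cmat_nil, Gmat_nil, Matrix.transpose_one, one_mul, mul_one]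
  | append_singleton w k ih =>
      obtain ⟨h1, h2, h3⟩ := ih
      have hkk : Bmat B w k k = 0 := skew_diag h1 k
      have hCoh : SignCoherent (Cmat B w) := hGSC B ⟨d, hd⟩ w
      have hε := eps_pm (Cmat B w) k
      set E := Emat (Bmat B w) k (epsCol (Cmat B w) k) with hE
      set F := Fmat (Bmat B w) k (-(epsCol (Cmat B w) k)) with hF
      have hC' : Cmat B (w ++ [k]) = Cmat B w * E := by
        rw [Cmat_append, mutC_eq hkk hCoh]
      have hG' : Gmat B (w ++ [k]) = Gmat B w * F := by
        rw [Gmat_append, Gstep_eq hCoh h2]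
      have hB' : Bmat B (w ++ [k]) = mutB (Bmat B w) k := Bmat_append B w k
      refine ⟨?_, ?_, ?_⟩
      · rw [hB']; exact skew_mutB h1 k
      · rw [hG', hB', hC', mul_assoc, hF, hE, F_mul_mutB hkk hε, ← mul_assoc, h2, mul_assoc]
      · rw [hC', hG', Matrix.transpose_mul]
        calc Eᵀ * (Cmat B w)ᵀ * Matrix.diagonal d * (Gmat B w * F)
            = Eᵀ * (((Cmat B w)ᵀ * Matrix.diagonal d * Gmat B w) * F) := by
              simp only [mul_assoc]
          _ = Eᵀ * (Matrix.diagonal d * F) := by rw [h3]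
          _ = (Eᵀ * Matrix.diagonal d) * F := by rw [mul_assoc]
          _ = (Matrix.diagonal d * F) * F := by rw [hE, EtD h1 k, hF]
          _ = Matrix.diagonal d * (F * F) := by rw [mul_assoc]
          _ = Matrix.diagonal d := by rw [hF, Fmat_invol hkk, mul_one]

/-! ### the seed-mutation formula (sub-induction) -/

lemma SUB (hGSC : GlobalSC n) (N : ℕ)
    (hM : ∀ v : List (Fin n), v.length ≤ N → ∀ B : Matrix (Fin n) (Fin n) ℤ,
      ∀ d : Fin n → ℤ, SkewSymmBy B d → Cmat (-(Bmat B v)) v.reverse * Cmat B v = 1) :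
    ∀ v : List (Fin n), v.length ≤ N →
      ∀ (B : Matrix (Fin n) (Fin n) ℤ) (d : Fin n → ℤ) (l : Fin n), SkewSymmBy B d →
        Cmat B (l :: v)
          = Emat B l (epsCol (Cmat (-(Bmat (mutB B l) v)) v.reverse) l)
            * Cmat (mutB B l) v := by
  intro v
  induction v using List.reverseRecOn with
  | nil =>
      intro _ B d l hd
      have hll : B l l = 0 := skew_diag hd l
      have h0 : Cmat B [l] = mutC B 1 l := by
        have e : ([l] : List (Fin n)) = [] ++ [l] := rfl
        rw [e, Cmat_append, Bmat_nil, Cmat_nil]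
      rw [h0, mutC_eq hll signCoherent_one, one_mul]
      show Emat B l (epsCol (1 : Matrix (Fin n) (Fin n) ℤ) l)
          = Emat B l (epsCol (1 : Matrix (Fin n) (Fin n) ℤ) l) * Cmat (mutB B l) []
      rw [Cmat_nil, mul_one]
  | append_singleton v k ih =>
      intro hlen B d l hd
      have hvlen : v.length ≤ N := by
        rw [List.length_append] at hlen; simp at hlen; omega
      have hIH := ih hvlen B d l hd
      set B₁ := mutB B l with hB₁def
      have hd₁ : SkewSymmBy B₁ d := skew_mutB hd l
      set Bbr := Bmat B₁ v with hBbdef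
      set Cbr := Cmat B₁ v with hCbdef
      set Chat := Cmat (-Bbr) v.reverse with hChdef
      set σ := epsCol Chat l with hσdef
      set epsb := epsCol Cbr k with hεbdef
      set Chat2 := Cmat (-(Bmat B₁ (v ++ [k]))) (v ++ [k]).reverse with hCh'def
      have hBbrd : SkewSymmBy Bbr d := skew_Bmat hd₁ v
      have hChatCbr : Chat * Cbr = 1 := hM v hvlen B₁ d hd₁
      have hCbrChat : Cbr * Chat = 1 := mul_eq_one_comm.mp hChatCbr
      have hCohCbr : SignCoherent Cbr := hGSC B₁ ⟨d, hd₁⟩ v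
      have hCohChat : SignCoherent Chat := hGSC (-Bbr) ⟨d, skew_neg hBbrd⟩ v.reverse
      have hCohP : SignCoherent (Cmat B (l :: v)) := hGSC B ⟨d, hd⟩ (l :: v)
      have hCohChat2 : SignCoherent Chat2 :=
        hGSC (-(Bmat B₁ (v ++ [k]))) ⟨d, skew_neg (skew_Bmat hd₁ (v ++ [k]))⟩ (v ++ [k]).reverse
      have hBbrkk : Bbr k k = 0 := skew_diag hBbrd k
      have hBll : B l l = 0 := skew_diag hd l
      have hBlv : Bmat B (l :: v) = Bbr := Bmat_cons B l v
      have hP' : Cmat B (l :: (v ++ [k]))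
          = Cmat B (l :: v) * Emat Bbr k (epsCol (Cmat B (l :: v)) k) := by
        rw [← List.cons_append, Cmat_append, hBlv, mutC_eq hBbrkk hCohP]
      have hCbr' : Cmat B₁ (v ++ [k]) = Cbr * Emat Bbr k epsb := by
        rw [Cmat_append, mutC_eq hBbrkk hCohCbr]
      have hChat2Cbr' : Chat2 * Cmat B₁ (v ++ [k]) = 1 := hM (v ++ [k]) hlen B₁ d hd₁
      have hEinv : Emat Bbr k epsb * Emat Bbr k epsb = 1 := Emat_invol hBbrkk epsb
      have hChat2eq : Chat2 = Emat Bbr k epsb * Chat := by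
        have hY : (Emat Bbr k epsb * Chat) * Cmat B₁ (v ++ [k]) = 1 := by
          rw [hCbr']
          calc (Emat Bbr k epsb * Chat) * (Cbr * Emat Bbr k epsb)
              = Emat Bbr k epsb * (Chat * Cbr) * Emat Bbr k epsb := by simp only [mul_assoc]
            _ = 1 := by rw [hChatCbr, mul_one, hEinv]
        calc Chat2 = Chat2 * 1 := (mul_one _).symm
          _ = Chat2 * (Cmat B₁ (v ++ [k]) * (Emat Bbr k epsb * Chat)) := by
                rw [mul_eq_one_comm.mp hY]
          _ = (Chat2 * Cmat B₁ (v ++ [k])) * (Emat Bbr k epsb * Chat) := by rw [mul_assoc]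
          _ = Emat Bbr k epsb * Chat := by rw [hChat2Cbr', one_mul]
      by_cases hcase : ∀ t, t ≠ l → Cbr t k = 0
      · -- CASE (b) : the k-th column of Cbr is supported at l only
        set c := Cbr l k with hcdef
        have hcol : ∀ t, Cbr t k = if t = l then c else 0 := by
          intro t
          by_cases ht : t = l
          · rw [ht, if_pos rfl]
          · rw [if_neg ht]; exact hcase t ht
        have hAc : ∀ i, Chat i l * c = if i = k then 1 else 0 := by
          intro i
          have h1 : (Chat * Cbr) i k = Chat i l * c := by
            rw [Matrix.mul_apply,
              Finset.sum_congr rfl (fun s _ => by rw [hcol s])]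
            simp [mul_ite, mul_zero, Finset.sum_ite_eq']
          rw [← h1, hChatCbr, Matrix.one_apply]
        have hckl : Chat k l * c = 1 := by rw [hAc k, if_pos rfl]
        have hc1 : c = 1 ∨ c = -1 :=
          Int.isUnit_iff.mp (IsUnit.of_mul_eq_one (Chat k l) (by rw [mul_comm]; exact hckl))
        have hc2 : c * c = 1 := by rcases hc1 with h | h <;> rw [h] <;> norm_num
        have hcn : c ≠ 0 := by rcases hc1 with h | h <;> rw [h] <;> norm_num
        have hchcol : ∀ i, Chat i l = if i = k then c else 0 := by
          intro i
          have hi := hAc i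
          by_cases hik : i = k
          · rw [if_pos hik]; rw [if_pos hik] at hi
            have h5 : Chat i l * c * c = 1 * c := by rw [hi]
            rw [mul_assoc, hc2, mul_one, one_mul] at h5
            exact h5
          · rw [if_neg hik]; rw [if_neg hik] at hi
            rcases mul_eq_zero.1 hi with h5 | h5
            · exact h5
            · exact absurd h5 hcn
        have hσc : σ = c := epsCol_unit hc1 hchcol
        have hepsbc : epsb = c := epsCol_unit hc1 hcol
        have hmc1 : -c = 1 ∨ -c = -1 := by rcases hc1 with h | h <;> rw [h] <;> norm_num
        -- column k of Cmat B (l :: v)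
        have hPcol : ∀ t, Cmat B (l :: v) t k = if t = l then -c else 0 := by
          intro t
          by_cases ht : t = l
          · subst ht
            rw [hIH, Emat_mul_apply, if_pos rfl, if_pos rfl]
            have hsum : (matPos (σ • B) * Cbr) t k = 0 := by
              rw [Matrix.mul_apply,
                Finset.sum_congr rfl (fun s _ => by rw [hcol s])]
              simp only [mul_ite, mul_zero, Finset.sum_ite_eq', Finset.mem_univ, if_true]
              rw [matPos_smul_apply, hBll, mul_zero, max_self, zero_mul]
            rw [hsum, add_zero, hcol t, if_pos rfl, if_pos rfl]
            ring
          · rw [hIH, Emat_mul_apply, if_neg ht, if_neg ht, one_mul, add_zero, hcol t,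
              if_neg ht, if_neg ht]
        have hεP : epsCol (Cmat B (l :: v)) k = -c := epsCol_unit hmc1 hPcol
        -- column l of Chat2
        have hChat2col : ∀ t, Chat2 t l = if t = k then -c else 0 := by
          intro t
          by_cases ht : t = k
          · subst ht
            rw [hChat2eq, Emat_mul_apply, if_pos rfl, if_pos rfl]
            have hsum : (matPos (epsb • Bbr) * Chat) t l = 0 := by
              rw [Matrix.mul_apply,
                Finset.sum_congr rfl (fun s _ => by rw [hchcol s])]
              simp only [mul_ite, mul_zero, Finset.sum_ite_eq', Finset.mem_univ, if_true]
              rw [matPos_smul_apply, hBbrkk, mul_zero, max_self, zero_mul]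
            rw [hsum, add_zero, hchcol t, if_pos rfl, if_pos rfl]
            ring
          · rw [hChat2eq, Emat_mul_apply, if_neg ht, if_neg ht, one_mul, add_zero, hchcol t,
              if_neg ht, if_neg ht]
        have hσ' : epsCol Chat2 l = -c := epsCol_unit hmc1 hChat2col
        -- the symmetrizer lemma d k = d l
        have hF2a := (FWD hGSC hd₁ v).2.1
        have hF3a := (FWD hGSC hd₁ v).2.2
        have hF3b := (FWD hGSC (skew_neg hBbrd) v.reverse).2.2
        have hdk : c * d l * Gmat B₁ v l k = d k := by
          have h2 : ((Cbr)ᵀ * Matrix.diagonal d * Gmat B₁ v) k k = Matrix.diagonal d k k := by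
            rw [hF3a]
          rw [Matrix.mul_apply,
            Finset.sum_congr rfl (fun t _ => by
              rw [Matrix.mul_diagonal, Matrix.transpose_apply, hcol t])] at h2
          simp only [ite_mul, zero_mul, Finset.sum_ite_eq', Finset.mem_univ, if_true,
            Matrix.diagonal_apply_eq] at h2
          linear_combination h2
        have hdl : c * d k * Gmat (-Bbr) v.reverse k l = d l := by
          have h2 : ((Chat)ᵀ * Matrix.diagonal d * Gmat (-Bbr) v.reverse) l l
              = Matrix.diagonal d l l := by rw [hF3b]
          rw [Matrix.mul_apply,
            Finset.sum_congr rfl (fun t _ => by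
              rw [Matrix.mul_diagonal, Matrix.transpose_apply, hchcol t])] at h2
          simp only [ite_mul, zero_mul, Finset.sum_ite_eq', Finset.mem_univ, if_true,
            Matrix.diagonal_apply_eq] at h2
          linear_combination h2
        have hdkl : d k = d l := by
          have hdvd1 : d l ∣ d k := ⟨c * Gmat B₁ v l k, by linear_combination -hdk⟩
          have hdvd2 : d k ∣ d l := ⟨c * Gmat (-Bbr) v.reverse k l, by linear_combination -hdl⟩
          exact Int.dvd_antisymm (le_of_lt (hd.1 k)) (le_of_lt (hd.1 l)) hdvd2 hdvd1
        -- the dagger identity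
        have hDB : Matrix.diagonal d * Bbr = (Cbr)ᵀ * Matrix.diagonal d * B₁ * Cbr := by
          calc Matrix.diagonal d * Bbr
              = ((Cbr)ᵀ * Matrix.diagonal d * Gmat B₁ v) * Bbr := by rw [hF3a]
            _ = (Cbr)ᵀ * Matrix.diagonal d * (Gmat B₁ v * Bbr) := by simp only [mul_assoc]
            _ = (Cbr)ᵀ * Matrix.diagonal d * (B₁ * Cbr) := by rw [hF2a]
            _ = (Cbr)ᵀ * Matrix.diagonal d * B₁ * Cbr := by simp only [mul_assoc]
        have hdagger : ∀ j', d k * Bbr k j' = -(c * (d l * (B * Cbr) l j')) := by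
          intro j'
          have h2 : (Matrix.diagonal d * Bbr) k j'
              = ((Cbr)ᵀ * (Matrix.diagonal d * B₁ * Cbr)) k j' := by
            rw [hDB]; simp only [mul_assoc]
          rw [Matrix.diagonal_mul] at h2
          rw [Matrix.mul_apply,
            Finset.sum_congr rfl (fun t _ => by
              rw [Matrix.transpose_apply, hcol t])] at h2
          simp only [ite_mul, zero_mul, Finset.sum_ite_eq', Finset.mem_univ, if_true] at h2
          have h5 : (Matrix.diagonal d * B₁ * Cbr) l j' = -(d l * (B * Cbr) l j') := by
            rw [Matrix.mul_apply, Matrix.mul_apply, Finset.mul_sum]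
            rw [← Finset.sum_neg_distrib]
            refine Finset.sum_congr rfl fun s _ => ?_
            rw [Matrix.diagonal_mul]
            have hrow : B₁ l s = -(B l s) := by rw [hB₁def]; exact mutB_row_self B l s
            rw [hrow]
            ring
          rw [h5] at h2
          linear_combination h2
        -- matrix identities for the key exchange
        set RA : Matrix (Fin n) (Fin n) ℤ := fun i j => if i = l then Bbr k j else 0
          with hRAdef
        have hRAapp : ∀ a b, RA a b = if a = l then Bbr k b else 0 := fun _ _ => rfl
        have hCR : Cbr * rowR (c • Bbr) k = RA := by
          ext i j
          rw [mul_rowR_apply, hcol i, hRAapp]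
          by_cases hi : i = l
          · rw [if_pos hi, if_pos hi, smul_app, ← mul_assoc, hc2, one_mul]
          · rw [if_neg hi, if_neg hi, zero_mul]
        have hMRA : Emat B l (-c) * RA = -RA := by
          ext i j
          rw [Emat_mul_apply, Matrix.neg_apply]
          by_cases hi : i = l
          · rw [if_pos hi, if_pos hi]
            have hsum : (matPos ((-c) • B) * RA) l j = 0 := by
              rw [Matrix.mul_apply]
              have he : ∀ s : Fin n,
                  matPos ((-c) • B) l s * RA s j
                    = if s = l then matPos ((-c) • B) l s * Bbr k j else 0 := by
                intro s
                rw [hRAapp]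
                by_cases hs : s = l
                · rw [if_pos hs, if_pos hs]
                · rw [if_neg hs, if_neg hs, mul_zero]
              rw [Finset.sum_congr rfl (fun s _ => he s)]
              simp only [Finset.sum_ite_eq', Finset.mem_univ, if_true]
              rw [matPos_smul_apply, hBll, mul_zero, max_self, zero_mul]
            rw [hsum, add_zero]
            ring
          · rw [if_neg hi, if_neg hi, one_mul, add_zero, hRAapp, if_neg hi, neg_zero]
        have hentry : ∀ j', c * (B * Cbr) l j' = -(Bbr k j') := by
          intro j'
          have h1' : d l * Bbr k j' = -(c * (d l * (B * Cbr) l j')) := by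
            have h0 := hdagger j'
            rw [hdkl] at h0
            exact h0
          have h2 : d l * (c * (B * Cbr) l j') = d l * (-(Bbr k j')) := by
            linear_combination h1'
          exact mul_left_cancel₀ (ne_of_gt (hd.1 l)) h2
        have hRC : rowR (c • B) l * Cbr = rowR (c • (B * Cbr)) l := by
          rw [rowR_mul, Matrix.smul_mul]
        have hLR : rowR (c • (B * Cbr)) l * Emat Bbr k (-c) = Emat B l (-c) * RA := by
          rw [hMRA]
          ext i j
          rw [mul_Emat_apply, Matrix.neg_apply, hRAapp]
          have hz : ∀ b, rowR (c • (B * Cbr)) l i b = if i = l then c * (B * Cbr) l b else 0 := by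
            intro b
            show (if i = l then (c • (B * Cbr)) i b else 0) = _
            by_cases hi : i = l
            · rw [if_pos hi, if_pos hi, hi, smul_app]
            · rw [if_neg hi, if_neg hi]
          rw [hz j, hz k]
          by_cases hi : i = l
          · rw [if_pos hi, if_pos hi, if_pos hi, hentry j, hentry k, hBbrkk, neg_zero,
              zero_mul, add_zero]
            by_cases hj : j = k
            · rw [if_pos hj, hj, hBbrkk]; ring
            · rw [if_neg hj, mul_one]
          · rw [if_neg hi, if_neg hi, if_neg hi, zero_mul, zero_mul, add_zero, neg_zero]
        -- the key exchange identity
        have hKEY : Emat B l c * Cbr * Emat Bbr k (-c) = Emat B l (-c) * Cbr * Emat Bbr k c := by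
          rw [Emat_diff B l c, Emat_diff Bbr k c]
          calc (Emat B l (-c) + rowR (c • B) l) * Cbr * Emat Bbr k (-c)
              = Emat B l (-c) * Cbr * Emat Bbr k (-c)
                + rowR (c • B) l * Cbr * Emat Bbr k (-c) := by rw [add_mul, add_mul]
            _ = Emat B l (-c) * Cbr * Emat Bbr k (-c)
                + Emat B l (-c) * (Cbr * rowR (c • Bbr) k) := by rw [hRC, hLR, hCR]
            _ = Emat B l (-c) * Cbr * Emat Bbr k (-c)
                + Emat B l (-c) * Cbr * rowR (c • Bbr) k := by
                  rw [mul_assoc (Emat B l (-c)) Cbr (rowR (c • Bbr) k)]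
            _ = Emat B l (-c) * Cbr * (Emat Bbr k (-c) + rowR (c • Bbr) k) := by rw [mul_add]
        -- final assembly for case (b)
        calc Cmat B (l :: (v ++ [k]))
            = Cmat B (l :: v) * Emat Bbr k (epsCol (Cmat B (l :: v)) k) := hP'
          _ = (Emat B l σ * Cbr) * Emat Bbr k (-c) := by rw [hεP, hIH]
          _ = Emat B l c * Cbr * Emat Bbr k (-c) := by rw [hσc]
          _ = Emat B l (-c) * Cbr * Emat Bbr k c := hKEY
          _ = Emat B l (-c) * (Cbr * Emat Bbr k epsb) := by rw [hepsbc, mul_assoc]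
          _ = Emat B l (epsCol Chat2 l) * Cmat B₁ (v ++ [k]) := by rw [hσ', hCbr']
      · -- CASE (a) : the k-th column of Cbr has a nonzero entry away from l
        push_neg at hcase
        obtain ⟨t, htl, htn⟩ := hcase
        have hPt : Cmat B (l :: v) t k = Cbr t k := by
          rw [hIH, Emat_mul_apply, if_neg htl, if_neg htl, one_mul, add_zero]
        have hεeq : epsCol (Cmat B (l :: v)) k = epsb :=
          epsCol_congr hCohP hCohCbr t hPt (by rw [hPt]; exact htn)
        have hsl : ∃ s, s ≠ k ∧ Chat s l ≠ 0 := by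
          by_contra hno
          push_neg at hno
          have hcolChat : ∀ s, Chat s l = if s = k then Chat k l else 0 := by
            intro s
            by_cases hs : s = k
            · rw [hs, if_pos rfl]
            · rw [if_neg hs]; exact hno s hs
          have h1 : ∀ a : Fin n, (Cbr * Chat) a l = Cbr a k * Chat k l := by
            intro a
            rw [Matrix.mul_apply,
              Finset.sum_congr rfl (fun s _ => by rw [hcolChat s])]
            simp [mul_ite, mul_zero, Finset.sum_ite_eq']
          have h3 : Cbr t k * Chat k l = 0 := by
            rw [← h1, hCbrChat, Matrix.one_apply, if_neg htl]
          have h4 : Cbr l k * Chat k l = 1 := by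
            rw [← h1, hCbrChat, Matrix.one_apply, if_pos rfl]
          rcases mul_eq_zero.1 h3 with h5 | h5
          · exact htn h5
          · rw [h5, mul_zero] at h4; norm_num at h4
        obtain ⟨s, hsk, hsn⟩ := hsl
        have hChat2s : Chat2 s l = Chat s l := by
          rw [hChat2eq, Emat_mul_apply, if_neg hsk, if_neg hsk, one_mul, add_zero]
        have hσeq : epsCol Chat2 l = σ :=
          epsCol_congr hCohChat2 hCohChat s hChat2s (by rw [hChat2s]; exact hsn)
        calc Cmat B (l :: (v ++ [k]))
            = Cmat B (l :: v) * Emat Bbr k (epsCol (Cmat B (l :: v)) k) := hP'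
          _ = (Emat B l σ * Cbr) * Emat Bbr k epsb := by rw [hεeq, hIH]
          _ = Emat B l σ * (Cbr * Emat Bbr k epsb) := by rw [mul_assoc]
          _ = Emat B l (epsCol Chat2 l) * Cmat B₁ (v ++ [k]) := by rw [hσeq, hCbr']

/-! ### the first duality (master induction) -/

lemma MASTER (hGSC : GlobalSC n) :
    ∀ (N : ℕ) (w : List (Fin n)), w.length ≤ N → ∀ (B : Matrix (Fin n) (Fin n) ℤ)
      (d : Fin n → ℤ), SkewSymmBy B d → Cmat (-(Bmat B w)) w.reverse * Cmat B w = 1 := by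
  intro N
  induction N with
  | zero =>
      intro w hw B d hd
      have hnil : w = [] := List.length_eq_zero_iff.mp (Nat.le_zero.mp hw)
      subst hnil
      show (1 : Matrix (Fin n) (Fin n) ℤ) * 1 = 1
      rw [one_mul]
  | succ N ihN =>
      intro w hw B d hd
      match w with
      | [] =>
          show (1 : Matrix (Fin n) (Fin n) ℤ) * 1 = 1
          rw [one_mul]
      | l :: u =>
          have hu : u.length ≤ N := by
            simp only [List.length_cons] at hw; omega
          have hd₁ : SkewSymmBy (mutB B l) d := skew_mutB hd l
          have hBll : B l l = 0 := skew_diag hd l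
          have hsub := SUB hGSC N ihN u hu B d l hd
          have hrev : (l :: u).reverse = u.reverse ++ [l] := by
            simp [List.reverse_cons]
          have hBmatc : Bmat B (l :: u) = Bmat (mutB B l) u := Bmat_cons B l u
          have hXB : Bmat (-(Bmat (mutB B l) u)) u.reverse = -(mutB B l) := by
            rw [Bmat_neg, Bmat_rev]
          have hcoh : SignCoherent (Cmat (-(Bmat (mutB B l) u)) u.reverse) :=
            hGSC _ ⟨d, skew_neg (skew_Bmat hd₁ u)⟩ _
          have hdiag : (-(mutB B l)) l l = 0 := skew_diag (skew_neg hd₁) l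
          have hL : Cmat (-(Bmat B (l :: u))) (l :: u).reverse
              = Cmat (-(Bmat (mutB B l) u)) u.reverse
                * Emat (-(mutB B l)) l
                    (epsCol (Cmat (-(Bmat (mutB B l) u)) u.reverse) l) := by
            rw [hrev, hBmatc, Cmat_append, hXB, mutC_eq hdiag hcoh]
          have hErow : Emat (-(mutB B l)) l
                (epsCol (Cmat (-(Bmat (mutB B l) u)) u.reverse) l)
              = Emat B l (epsCol (Cmat (-(Bmat (mutB B l) u)) u.reverse) l) := by
            refine Emat_congr_row (fun j => ?_) _
            show -(mutB B l l j) = B l j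
            rw [mutB_row_self, neg_neg]
          rw [hL, hErow, hsub]
          calc Cmat (-(Bmat (mutB B l) u)) u.reverse
                * Emat B l (epsCol (Cmat (-(Bmat (mutB B l) u)) u.reverse) l)
                * (Emat B l (epsCol (Cmat (-(Bmat (mutB B l) u)) u.reverse) l)
                  * Cmat (mutB B l) u)
              = Cmat (-(Bmat (mutB B l) u)) u.reverse
                * ((Emat B l (epsCol (Cmat (-(Bmat (mutB B l) u)) u.reverse) l)
                  * Emat B l (epsCol (Cmat (-(Bmat (mutB B l) u)) u.reverse) l))
                  * Cmat (mutB B l) u) := by simp only [mul_assoc]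
            _ = Cmat (-(Bmat (mutB B l) u)) u.reverse * Cmat (mutB B l) u := by
                  rw [Emat_invol hBll, one_mul]
            _ = 1 := ihN u hu (mutB B l) d hd₁

end SCaux


/-- sign-coherence of g-vectors: under the global sign-coherence hypothesis,
for each `i` the entries of row `i` of `G^B(w)` are all nonnegative or all nonpositive. -/
theorem Gmat_rows_signCoherent {n : ℕ} (hGSC : GlobalSC n) (B : Matrix (Fin n) (Fin n) ℤ)
    (hB : SkewSymmetrizable B) (w : List (Fin n)) :
    ∀ i, (∀ j, 0 ≤ Gmat B w i j) ∨ (∀ j, Gmat B w i j ≤ 0) := by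
  obtain ⟨d, hd⟩ := hB
  have hfwd := (SCaux.FWD hGSC hd w).2.2
  have hdual : Cmat (-(Bmat B w)) w.reverse * Cmat B w = 1 :=
    SCaux.MASTER hGSC w.length w le_rfl B d hd
  have hcomm : Cmat B w * Cmat (-(Bmat B w)) w.reverse = 1 :=
    mul_eq_one_comm.mp hdual
  have hDG : Matrix.diagonal d * Gmat B w
      = (Cmat (-(Bmat B w)) w.reverse)ᵀ * Matrix.diagonal d := by
    calc Matrix.diagonal d * Gmat B w
        = ((Cmat (-(Bmat B w)) w.reverse)ᵀ * (Cmat B w)ᵀ)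
            * (Matrix.diagonal d * Gmat B w) := by
          rw [← Matrix.transpose_mul, hcomm, Matrix.transpose_one, one_mul]
      _ = (Cmat (-(Bmat B w)) w.reverse)ᵀ
            * ((Cmat B w)ᵀ * Matrix.diagonal d * Gmat B w) := by simp only [mul_assoc]
      _ = (Cmat (-(Bmat B w)) w.reverse)ᵀ * Matrix.diagonal d := by rw [hfwd]
  intro i
  have hent : ∀ j, d i * Gmat B w i j = Cmat (-(Bmat B w)) w.reverse j i * d j := by
    intro j
    have h2 : (Matrix.diagonal d * Gmat B w) i j
        = ((Cmat (-(Bmat B w)) w.reverse)ᵀ * Matrix.diagonal d) i j := by rw [hDG]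
    rw [Matrix.diagonal_mul, Matrix.mul_diagonal, Matrix.transpose_apply] at h2
    exact h2
  have hSC : SignCoherent (Cmat (-(Bmat B w)) w.reverse) :=
    hGSC _ ⟨d, SCaux.skew_neg (SCaux.skew_Bmat hd w)⟩ _
  rcases hSC i with hp | hn
  · left
    intro j
    have h3 : 0 ≤ d i * Gmat B w i j := by
      rw [hent j]; exact mul_nonneg (hp j) (le_of_lt (hd.1 j))
    nlinarith [hd.1 i]
  · right
    intro j
    have h3 : d i * Gmat B w i j ≤ 0 := by
      rw [hent j]
      have h4 : 0 ≤ (-(Cmat (-(Bmat B w)) w.reverse j i)) * d j :=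
        mul_nonneg (neg_nonneg.2 (hn j)) (le_of_lt (hd.1 j))
      nlinarith
    nlinarith [hd.1 i]
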